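/- If Q = T ⊗ T is the representation of SL(2,ℝ) on L²(ℝ²) given by Q(g)f(x₁,x₂) = f((b+dx₁)/(a+cx₁), (b+dx₂)/(a+cx₂))·(a+cx₁)^{-1}(a+cx₂)^{-1}, and J : L²(ν) → L²(ℝ²) is defined by (Jf)(x₁,x₂) = f(x₁,x₂)(x₁−x₂)^{-1} where dν = |x₁−x₂|^{-2}dx₁dx₂, then J is a unitary operator intertwining the natural (measure-preserving shift) action of SL(2,ℝ) on L²(ν) with Q. -/

import Mathlib

open MeasureTheory

/-- The measure `dν = |x₁ − x₂|⁻² dx₁ dx₂` on the plane. -/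
noncomputable def nuMeasure : Measure (ℝ × ℝ) :=
  (volume : Measure (ℝ × ℝ)).withDensity
    (fun p => ENNReal.ofReal (|p.1 - p.2| ^ (-2 : ℤ)))

/-- The Möbius action of `g ∈ SL(2,ℝ)` on a point of `ℝ`. -/
noncomputable def moeb (g : Matrix.SpecialLinearGroup (Fin 2) ℝ) (x : ℝ) : ℝ :=
  ((g : Matrix (Fin 2) (Fin 2) ℝ) 0 1 + (g : Matrix (Fin 2) (Fin 2) ℝ) 1 1 * x) /
    ((g : Matrix (Fin 2) (Fin 2) ℝ) 0 0 + (g : Matrix (Fin 2) (Fin 2) ℝ) 1 0 * x)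

namespace JProof

open scoped ENNReal NNReal

/-- The density of `nuMeasure`. -/
noncomputable def dens (p : ℝ × ℝ) : ℝ≥0∞ := ENNReal.ofReal (|p.1 - p.2| ^ (-2 : ℤ))

lemma nuMeasure_eq : nuMeasure = (volume : Measure (ℝ × ℝ)).withDensity dens := rfl

lemma dens_eq_sq (p : ℝ × ℝ) : dens p = (‖(p.1 - p.2)⁻¹‖₊ : ℝ≥0∞) ^ (2 : ℝ) := by
  rw [dens, ← enorm_eq_nnnorm, Real.enorm_eq_ofReal_abs,
    ENNReal.ofReal_rpow_of_nonneg (abs_nonneg _) (by norm_num)]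
  congr 1
  rw [abs_inv, show ((2 : ℝ) = ((2 : ℕ) : ℝ)) by norm_num, Real.rpow_natCast, inv_pow,
    zpow_neg]
  rw [show ((2:ℤ) = ((2:ℕ):ℤ)) from rfl, zpow_natCast, sq_abs]

lemma dens_meas : Measurable dens := by
  have : dens = fun p : ℝ × ℝ => ENNReal.ofReal (((p.1 - p.2) ^ 2)⁻¹) := by
    funext p
    rw [dens, zpow_neg]
    congr 2
    rw [show ((2:ℤ) = ((2:ℕ):ℤ)) by norm_num, zpow_natCast, sq_abs]
  rw [this]
  exact (((measurable_fst.sub measurable_snd).pow_const 2).inv).ennreal_ofReal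

lemma dens_lt_top (p : ℝ × ℝ) : dens p < ∞ := ENNReal.ofReal_lt_top

lemma diag_null : volume {p : ℝ × ℝ | p.1 = p.2} = 0 := by
  have hs : MeasurableSet {p : ℝ × ℝ | p.1 = p.2} :=
    (isClosed_eq continuous_fst continuous_snd).measurableSet
  rw [Measure.volume_eq_prod ℝ ℝ, Measure.measure_prod_null hs]
  refine Filter.Eventually.of_forall fun x => ?_
  have h0 : (Prod.mk x ⁻¹' {p : ℝ × ℝ | p.1 = p.2}) = {x} := by
    ext y; simp [eq_comm]
  show volume (Prod.mk x ⁻¹' {p : ℝ × ℝ | p.1 = p.2}) = 0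
  rw [h0, Real.volume_singleton]

lemma offdiag_ae : ∀ᵐ p ∂(volume : Measure (ℝ × ℝ)), p.1 ≠ p.2 := by
  rw [ae_iff]
  simpa using diag_null

lemma dens_pos_ae : ∀ᵐ p ∂(volume : Measure (ℝ × ℝ)), dens p ≠ 0 := by
  filter_upwards [offdiag_ae] with p hp
  have : (0:ℝ) < |p.1 - p.2| ^ (-2 : ℤ) :=
    zpow_pos (abs_pos.2 (sub_ne_zero.2 hp)) _
  exact (ENNReal.ofReal_pos.2 this).ne'

lemma vol_ac : (volume : Measure (ℝ × ℝ)) ≪ nuMeasure :=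
  withDensity_absolutelyContinuous' dens_meas.aemeasurable dens_pos_ae

lemma nu_ac : nuMeasure ≪ (volume : Measure (ℝ × ℝ)) :=
  withDensity_absolutelyContinuous _ _

lemma key1 (f : ℝ × ℝ → ℝ) :
    ∫⁻ p, (‖f p * (p.1 - p.2)⁻¹‖₊ : ℝ≥0∞) ^ (2:ℝ) ∂(volume : Measure (ℝ × ℝ))
      = ∫⁻ p, (‖f p‖₊ : ℝ≥0∞) ^ (2:ℝ) ∂nuMeasure := by
  rw [nuMeasure_eq, lintegral_withDensity_eq_lintegral_mul_non_measurable _ dens_meas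
    (Filter.Eventually.of_forall dens_lt_top)]
  refine lintegral_congr fun p => ?_
  simp only [Pi.mul_apply]
  rw [nnnorm_mul, ENNReal.coe_mul,
    ENNReal.mul_rpow_of_nonneg _ _ (by norm_num : (0:ℝ) ≤ 2), dens_eq_sq, mul_comm]

lemma key2 (h : ℝ × ℝ → ℝ) :
    ∫⁻ p, (‖h p * (p.1 - p.2)‖₊ : ℝ≥0∞) ^ (2:ℝ) ∂nuMeasure
      = ∫⁻ p, (‖h p‖₊ : ℝ≥0∞) ^ (2:ℝ) ∂(volume : Measure (ℝ × ℝ)) := by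
  rw [nuMeasure_eq, lintegral_withDensity_eq_lintegral_mul_non_measurable _ dens_meas
    (Filter.Eventually.of_forall dens_lt_top)]
  refine lintegral_congr_ae ?_
  filter_upwards [offdiag_ae] with p hp
  have hx : p.1 - p.2 ≠ 0 := sub_ne_zero.2 hp
  simp only [Pi.mul_apply]
  rw [nnnorm_mul, ENNReal.coe_mul,
    ENNReal.mul_rpow_of_nonneg _ _ (by norm_num : (0:ℝ) ≤ 2), dens_eq_sq]
  rw [mul_left_comm, ← ENNReal.mul_rpow_of_nonneg _ _ (by norm_num : (0:ℝ) ≤ 2),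
    ← ENNReal.coe_mul, ← nnnorm_mul, inv_mul_cancel₀ hx]
  simp

lemma eJ1 (f : ℝ × ℝ → ℝ) :
    eLpNorm (fun p : ℝ × ℝ => f p * (p.1 - p.2)⁻¹) 2 (volume : Measure (ℝ × ℝ))
      = eLpNorm f 2 nuMeasure := by
  rw [eLpNorm_eq_lintegral_rpow_enorm_toReal two_ne_zero (by norm_num),
    eLpNorm_eq_lintegral_rpow_enorm_toReal two_ne_zero (by norm_num)]
  simp only [ENNReal.toReal_ofNat, enorm_eq_nnnorm]
  rw [key1]

lemma eJ2 (h : ℝ × ℝ → ℝ) :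
    eLpNorm (fun p : ℝ × ℝ => h p * (p.1 - p.2)) 2 nuMeasure
      = eLpNorm h 2 (volume : Measure (ℝ × ℝ)) := by
  rw [eLpNorm_eq_lintegral_rpow_enorm_toReal two_ne_zero (by norm_num),
    eLpNorm_eq_lintegral_rpow_enorm_toReal two_ne_zero (by norm_num)]
  simp only [ENNReal.toReal_ofNat, enorm_eq_nnnorm]
  rw [key2]

lemma memJ (f : Lp ℝ 2 nuMeasure) :
    MemLp (fun p : ℝ × ℝ => f p * (p.1 - p.2)⁻¹) 2 (volume : Measure (ℝ × ℝ)) := by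
  refine ⟨((Lp.aestronglyMeasurable f).mono_ac vol_ac).mul
    ((measurable_fst.sub measurable_snd).inv).aestronglyMeasurable, ?_⟩
  rw [eJ1]
  exact Lp.eLpNorm_lt_top f

lemma memJinv (h : Lp ℝ 2 (volume : Measure (ℝ × ℝ))) :
    MemLp (fun p : ℝ × ℝ => h p * (p.1 - p.2)) 2 nuMeasure := by
  refine ⟨((Lp.aestronglyMeasurable h).mono_ac nu_ac).mul
    (measurable_fst.sub measurable_snd).aestronglyMeasurable, ?_⟩
  rw [eJ2]
  exact Lp.eLpNorm_lt_top h

noncomputable def Jfun (f : Lp ℝ 2 nuMeasure) : Lp ℝ 2 (volume : Measure (ℝ × ℝ)) :=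
  (memJ f).toLp _

noncomputable def Jinvfun (h : Lp ℝ 2 (volume : Measure (ℝ × ℝ))) : Lp ℝ 2 nuMeasure :=
  (memJinv h).toLp _

lemma Jfun_coe (f : Lp ℝ 2 nuMeasure) :
    ⇑(Jfun f) =ᵐ[volume] fun p : ℝ × ℝ => f p * (p.1 - p.2)⁻¹ :=
  (memJ f).coeFn_toLp

lemma Jinvfun_coe (h : Lp ℝ 2 (volume : Measure (ℝ × ℝ))) :
    ⇑(Jinvfun h) =ᵐ[nuMeasure] fun p : ℝ × ℝ => h p * (p.1 - p.2) :=
  (memJinv h).coeFn_toLp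

noncomputable def Jequiv : Lp ℝ 2 nuMeasure ≃ₗᵢ[ℝ] Lp ℝ 2 (volume : Measure (ℝ × ℝ)) where
  toFun := Jfun
  invFun := Jinvfun
  map_add' f g := by
    apply Lp.ext
    have h1 := Jfun_coe (f + g)
    have h2 := Jfun_coe f
    have h3 := Jfun_coe g
    have h4 := Lp.coeFn_add (Jfun f) (Jfun g)
    have h5 : ⇑(f + g) =ᵐ[volume] ⇑f + ⇑g := vol_ac.ae_eq (Lp.coeFn_add f g)
    filter_upwards [h1, h2, h3, h4, h5] with p e1 e2 e3 e4 e5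
    simp only [Pi.add_apply] at *
    rw [e1, e4, e2, e3, e5]
    ring
  map_smul' c f := by
    apply Lp.ext
    have h1 := Jfun_coe (c • f)
    have h2 := Jfun_coe f
    have h4 := Lp.coeFn_smul c (Jfun f)
    have h5 : ⇑(c • f) =ᵐ[volume] c • ⇑f := vol_ac.ae_eq (Lp.coeFn_smul c f)
    filter_upwards [h1, h2, h4, h5] with p e1 e2 e4 e5
    simp only [Pi.smul_apply, smul_eq_mul, RingHom.id_apply] at *
    rw [e1, e4, e2, e5]
    ring
  left_inv f := by
    apply Lp.ext
    have h1 := Jinvfun_coe (Jfun f)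
    have h2 : ⇑(Jfun f) =ᵐ[nuMeasure] fun p : ℝ × ℝ => f p * (p.1 - p.2)⁻¹ :=
      nu_ac.ae_eq (Jfun_coe f)
    have h3 : ∀ᵐ p ∂nuMeasure, p.1 ≠ p.2 := offdiag_ae.filter_mono nu_ac.ae_le
    filter_upwards [h1, h2, h3] with p e1 e2 e3
    have hx : p.1 - p.2 ≠ 0 := sub_ne_zero.2 e3
    rw [e1, e2]
    field_simp
  right_inv h := by
    apply Lp.ext
    have h1 := Jfun_coe (Jinvfun h)
    have h2 : ⇑(Jinvfun h) =ᵐ[volume] fun p : ℝ × ℝ => h p * (p.1 - p.2) :=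
      vol_ac.ae_eq (Jinvfun_coe h)
    filter_upwards [h1, h2, offdiag_ae] with p e1 e2 e3
    rw [e1, e2]
    have hx : p.1 - p.2 ≠ 0 := sub_ne_zero.2 e3
    field_simp
  norm_map' f := by
    show ‖Jfun f‖ = ‖f‖
    rw [Jfun, Lp.norm_toLp, Lp.norm_def, eJ1]

lemma measurable_moeb (g : Matrix.SpecialLinearGroup (Fin 2) ℝ) : Measurable (moeb g) := by
  unfold moeb
  exact (measurable_const.add (measurable_id.const_mul _)).div
    (measurable_const.add (measurable_id.const_mul _))

lemma det_entries (g : Matrix.SpecialLinearGroup (Fin 2) ℝ) :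
    (g : Matrix (Fin 2) (Fin 2) ℝ) 0 0 * (g : Matrix (Fin 2) (Fin 2) ℝ) 1 1
      - (g : Matrix (Fin 2) (Fin 2) ℝ) 0 1 * (g : Matrix (Fin 2) (Fin 2) ℝ) 1 0 = 1 := by
  have := g.property
  rwa [Matrix.det_fin_two] at this

lemma map_moeb_ac (g : Matrix.SpecialLinearGroup (Fin 2) ℝ) :
    Measure.map (moeb g) (volume : Measure ℝ) ≪ (volume : Measure ℝ) := by
  set a := (g : Matrix (Fin 2) (Fin 2) ℝ) 0 0 with ha
  set b := (g : Matrix (Fin 2) (Fin 2) ℝ) 0 1 with hb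
  set c := (g : Matrix (Fin 2) (Fin 2) ℝ) 1 0 with hc
  set d := (g : Matrix (Fin 2) (Fin 2) ℝ) 1 1 with hd
  have hdet : a * d - b * c = 1 := det_entries g
  refine Measure.AbsolutelyContinuous.mk fun s hs hsnull => ?_
  rw [Measure.map_apply (measurable_moeb g) hs]
  set m' : ℝ → ℝ := fun y => (a * y - b) / (d - c * y) with hm'
  have hsub : moeb g ⁻¹' s ⊆ m' '' (s ∩ {y | d - c * y ≠ 0}) ∪ {x | a + c * x = 0} := by
    intro x hx
    by_cases hcx : a + c * x = 0
    · exact Or.inr hcx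
    · left
      have hmx : moeb g x = (b + d * x) / (a + c * x) := rfl
      have hy' : (d - c * moeb g x) * (a + c * x) = 1 := by
        rw [hmx]
        field_simp
        linear_combination hdet
      have hyne : d - c * moeb g x ≠ 0 := left_ne_zero_of_mul (hy' ▸ one_ne_zero)
      refine ⟨moeb g x, ⟨hx, hyne⟩, ?_⟩
      show (a * moeb g x - b) / (d - c * moeb g x) = x
      have hx2 : a * moeb g x - b = x * (d - c * moeb g x) := by
        rw [hmx]
        have hcx' : a + x * c ≠ 0 := by rw [mul_comm]; exact hcx
        field_simp
        ring
      rw [hx2, mul_div_assoc, div_self hyne, mul_one]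
  refine measure_mono_null hsub (measure_union_null ?_ ?_)
  · refine addHaar_image_eq_zero_of_differentiableOn_of_addHaar_eq_zero
      (volume : Measure ℝ) ?_ (measure_mono_null Set.inter_subset_left hsnull)
    intro y hy
    refine DifferentiableAt.differentiableWithinAt ?_
    exact ((differentiableAt_id.const_mul a).sub_const b).div
      ((differentiableAt_const d).sub (differentiableAt_id.const_mul c)) hy.2
  · by_cases hc0 : c = 0
    · have ha0 : a ≠ 0 := by
        intro h0
        rw [hc0, h0] at hdet
        norm_num at hdet
      have : {x : ℝ | a + c * x = 0} = ∅ := by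
        ext x; simp [hc0, ha0]
      rw [this]; simp
    · refine measure_mono_null (fun x hx => ?_) (measure_singleton (-a / c))
      have hx' : a + c * x = 0 := hx
      have : x = -a / c := by field_simp; linarith
      exact this
lemma qmp (g : Matrix.SpecialLinearGroup (Fin 2) ℝ) :
    Measure.QuasiMeasurePreserving (fun p : ℝ × ℝ => (moeb g p.1, moeb g p.2))
      (volume : Measure (ℝ × ℝ)) (volume : Measure (ℝ × ℝ)) := by
  have hm := measurable_moeb g
  refine ⟨(hm.comp measurable_fst).prodMk (hm.comp measurable_snd), ?_⟩
  have heq : (fun p : ℝ × ℝ => (moeb g p.1, moeb g p.2)) = Prod.map (moeb g) (moeb g) := rfl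
  rw [heq, Measure.volume_eq_prod ℝ ℝ, ← Measure.map_prod_map _ _ hm hm]
  exact Measure.AbsolutelyContinuous.prod (map_moeb_ac g) (map_moeb_ac g)

lemma line_null (r : ℝ) : volume {p : ℝ × ℝ | p.1 = r} = 0 := by
  have : {p : ℝ × ℝ | p.1 = r} ⊆ ({r} : Set ℝ) ×ˢ (Set.univ : Set ℝ) := by
    intro p hp; exact ⟨hp, trivial⟩
  refine measure_mono_null this ?_
  rw [Measure.volume_eq_prod ℝ ℝ, Measure.prod_prod, Real.volume_singleton, zero_mul]

lemma line_null₂ (r : ℝ) : volume {p : ℝ × ℝ | p.2 = r} = 0 := by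
  have : {p : ℝ × ℝ | p.2 = r} ⊆ (Set.univ : Set ℝ) ×ˢ ({r} : Set ℝ) := by
    intro p hp; exact ⟨trivial, hp⟩
  refine measure_mono_null this ?_
  rw [Measure.volume_eq_prod ℝ ℝ, Measure.prod_prod, Real.volume_singleton, mul_zero]

lemma denom_ae (g : Matrix.SpecialLinearGroup (Fin 2) ℝ) :
    ∀ᵐ p ∂(volume : Measure (ℝ × ℝ)),
      (g : Matrix (Fin 2) (Fin 2) ℝ) 0 0 + (g : Matrix (Fin 2) (Fin 2) ℝ) 1 0 * p.1 ≠ 0 ∧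
      (g : Matrix (Fin 2) (Fin 2) ℝ) 0 0 + (g : Matrix (Fin 2) (Fin 2) ℝ) 1 0 * p.2 ≠ 0 := by
  set a := (g : Matrix (Fin 2) (Fin 2) ℝ) 0 0
  set b := (g : Matrix (Fin 2) (Fin 2) ℝ) 0 1
  set c := (g : Matrix (Fin 2) (Fin 2) ℝ) 1 0
  set d := (g : Matrix (Fin 2) (Fin 2) ℝ) 1 1
  have hdet : a * d - b * c = 1 := det_entries g
  by_cases hc0 : c = 0
  · have ha0 : a ≠ 0 := by
      intro h0; rw [hc0, h0] at hdet; norm_num at hdet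
    refine Filter.Eventually.of_forall fun p => ?_
    simp [hc0, ha0]
  · rw [ae_iff]
    refine measure_mono_null (fun p hp => ?_)
      (measure_union_null (line_null (-a / c)) (line_null₂ (-a / c)))
    simp only [Set.mem_setOf_eq, not_and_or, not_not] at hp
    rcases hp with hp | hp
    · left
      show p.1 = -a / c
      field_simp; linarith
    · right
      show p.2 = -a / c
      field_simp; linarith

end JProof

open JProof in
/-- The operator `J : L²(ν) → L²(ℝ²)`, `(Jf)(x₁,x₂) = f(x₁,x₂)(x₁−x₂)⁻¹`, is a
unitary operator intertwining the measure-preserving shift action of `SL(2,ℝ)` on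
`L²(ν)` with the representation
`Q(g)h(x₁,x₂) = h(g·x₁, g·x₂)(a+cx₁)⁻¹(a+cx₂)⁻¹ = (T ⊗ T)(g) h`. -/
theorem J_unitary_intertwiner :
    ∃ J : Lp ℝ 2 nuMeasure ≃ₗᵢ[ℝ] Lp ℝ 2 (volume : Measure (ℝ × ℝ)),
      (∀ f : Lp ℝ 2 nuMeasure,
        ⇑(J f) =ᵐ[volume] fun p : ℝ × ℝ => f p * (p.1 - p.2)⁻¹) ∧
      (∀ (g : Matrix.SpecialLinearGroup (Fin 2) ℝ) (f fg : Lp ℝ 2 nuMeasure),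
        (⇑fg =ᵐ[nuMeasure] fun p : ℝ × ℝ => f (moeb g p.1, moeb g p.2)) →
        ⇑(J fg) =ᵐ[volume] fun p : ℝ × ℝ =>
          (J f) (moeb g p.1, moeb g p.2) *
            ((g : Matrix (Fin 2) (Fin 2) ℝ) 0 0 + (g : Matrix (Fin 2) (Fin 2) ℝ) 1 0 * p.1)⁻¹ *
            ((g : Matrix (Fin 2) (Fin 2) ℝ) 0 0 + (g : Matrix (Fin 2) (Fin 2) ℝ) 1 0 * p.2)⁻¹) := by
  refine ⟨Jequiv, fun f => Jfun_coe f, ?_⟩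
  intro g f fg hfg
  set a := (g : Matrix (Fin 2) (Fin 2) ℝ) 0 0 with ha
  set b := (g : Matrix (Fin 2) (Fin 2) ℝ) 0 1 with hb
  set c := (g : Matrix (Fin 2) (Fin 2) ℝ) 1 0 with hc
  set d := (g : Matrix (Fin 2) (Fin 2) ℝ) 1 1 with hd
  have hdet : a * d - b * c = 1 := det_entries g
  have h1 : ⇑(Jequiv fg) =ᵐ[volume] fun p : ℝ × ℝ => fg p * (p.1 - p.2)⁻¹ := Jfun_coe fg
  have h2 : ⇑(Jequiv f) =ᵐ[volume] fun q : ℝ × ℝ => f q * (q.1 - q.2)⁻¹ := Jfun_coe f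
  have h2' : ∀ᵐ p ∂(volume : Measure (ℝ × ℝ)),
      (Jequiv f) (moeb g p.1, moeb g p.2)
        = f (moeb g p.1, moeb g p.2) * (moeb g p.1 - moeb g p.2)⁻¹ := by
    have := (qmp g).tendsto_ae.eventually h2
    filter_upwards [this] with p hp
    exact hp
  have hfg' : ⇑fg =ᵐ[volume] fun p : ℝ × ℝ => f (moeb g p.1, moeb g p.2) := vol_ac.ae_eq hfg
  filter_upwards [h1, h2', hfg', offdiag_ae, denom_ae g] with p e1 e2 e3 e4 e5
  obtain ⟨e5a, e5b⟩ := e5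
  have e5a'' : a + c * p.1 ≠ 0 := e5a
  have e5b'' : a + c * p.2 ≠ 0 := e5b
  have e5a' : a + p.1 * c ≠ 0 := by rw [mul_comm]; exact e5a
  have e5b' : a + p.2 * c ≠ 0 := by rw [mul_comm]; exact e5b
  rw [e1, e3, e2]
  have hm1 : moeb g p.1 = (b + d * p.1) / (a + c * p.1) := rfl
  have hm2 : moeb g p.2 = (b + d * p.2) / (a + c * p.2) := rfl
  have hmdiff : moeb g p.1 - moeb g p.2
      = (p.1 - p.2) * ((a + c * p.1)⁻¹ * (a + c * p.2)⁻¹) := by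
    rw [hm1, hm2]
    field_simp
    linear_combination (p.1 - p.2) * hdet
  rw [hmdiff]
  have hx : p.1 - p.2 ≠ 0 := sub_ne_zero.2 e4
  field_simp
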